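/- Let P, Q : Mod(R) → Mod(S) be right exact, coproduct-preserving additive functors between left module categories. If P(R) and Q(R) are isomorphic as (S,R)-bimodules (with the right R-action induced by functoriality applied to right-multiplication maps), then P and Q are naturally isomorphic functors. -/

import Mathlib

open CategoryTheory

def rmul (R : Type*) [Ring R] (r : R) : R →ₗ[R] R where
  toFun x := x * r
  map_add' := fun a b => add_mul a b r
  map_smul' := by intro s a; simp [smul_eq_mul, mul_assoc]

namespace EWaux

open CategoryTheory.Limits

universe u
variable {R S : Type u} [Ring R] [Ring S]

/-- The map `R ⟶ M` sending `r` to `r • x`. -/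
noncomputable def gen (M : ModuleCat.{u} R) (x : M) : ModuleCat.of R R ⟶ M :=
  ModuleCat.ofHom (LinearMap.toSpanSingleton R M x)

lemma hom_eq_gen {M : ModuleCat.{u} R} (m : ModuleCat.of R R ⟶ M) : m = gen M (m (1 : R)) := by
  apply ModuleCat.hom_ext
  apply LinearMap.ext_ring
  simp [gen, ModuleCat.ofHom]

/-- The free module on the underlying set of `M`. -/
noncomputable def F0 (M : ModuleCat.{u} R) : ModuleCat.{u} R :=
  ModuleCat.of R ((M : Type u) →₀ R)

noncomputable def genCofan (M : ModuleCat.{u} R) : Cofan (fun _ : M => ModuleCat.of R R) :=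
  Cofan.mk (F0 M) (fun x => ModuleCat.ofHom (Finsupp.lsingle x))

noncomputable def genCofanIsColimit (M : ModuleCat.{u} R) : IsColimit (genCofan M) :=
  mkCofanColimit _
    (fun t => ModuleCat.ofHom (Finsupp.lsum ℕ (fun x => (t.inj x).hom)))
    (fun t x => by
      apply ModuleCat.hom_ext
      apply LinearMap.ext_ring
      simp only [genCofan, F0, ModuleCat.ofHom, ModuleCat.hom_comp, Cofan.mk_pt,
        LinearMap.comp_apply, id_eq]
      show (Finsupp.lsum ℕ fun x => (t.inj x).hom)
          (Finsupp.single x (1 : R)) = _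
      rw [Finsupp.lsum_single])
    (fun t m hm => by
      apply ModuleCat.hom_ext
      apply Finsupp.lhom_ext'
      intro x
      apply LinearMap.ext_ring
      have h1 := LinearMap.congr_fun (congr_arg ModuleCat.Hom.hom (hm x)) (1 : R)
      simp only [genCofan, F0, ModuleCat.ofHom, ModuleCat.hom_comp, Cofan.mk_pt,
        LinearMap.comp_apply, id_eq] at h1 ⊢
      exact h1.trans (Finsupp.lsum_single ℕ (fun y => (t.inj y).hom) x (1 : R)).symm)

/-- The canonical surjection from the free module on `M` to `M`. -/
noncomputable def pr (M : ModuleCat.{u} R) : F0 M ⟶ M :=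
  ModuleCat.ofHom (Finsupp.linearCombination R id)

lemma inj_comp_pr (M : ModuleCat.{u} R) (x : M) :
    (genCofan M).inj x ≫ pr M = gen M x := by
  apply ModuleCat.hom_ext
  apply LinearMap.ext_ring
  simp only [genCofan, pr, gen, F0, ModuleCat.ofHom, ModuleCat.hom_comp, Cofan.mk_pt,
    LinearMap.comp_apply, id_eq]
  show Finsupp.linearCombination R (_root_.id : M → M) (Finsupp.single x (1 : R)) = _
  rw [Finsupp.linearCombination_single, one_smul]
  simp [gen, ModuleCat.ofHom]

instance (M : ModuleCat.{u} R) : Epi (pr M) := by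
  rw [ModuleCat.epi_iff_surjective]
  intro x
  exact ⟨Finsupp.single x 1, by
    show Finsupp.linearCombination R _root_.id (Finsupp.single x 1) = x
    simp⟩

/-- `M` is the cokernel of the inclusion of the kernel of `pr M`. -/
noncomputable def cokIsColimit (M : ModuleCat.{u} R) :
    IsColimit (CokernelCofork.ofπ (pr M) (kernel.condition (pr M))) :=
  Abelian.epiIsCokernelOfKernel
    (KernelFork.ofι (kernel.ι (pr M)) (kernel.condition (pr M))) (kernelIsKernel (pr M))

section Functor

variable (P Q : ModuleCat.{u} R ⥤ ModuleCat.{u} S) [P.Additive] [Q.Additive]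
  [Limits.PreservesFiniteColimits P] [Limits.PreservesFiniteColimits Q]
  [∀ ι : Type u, Limits.PreservesColimitsOfShape (Discrete ι) P]
  [∀ ι : Type u, Limits.PreservesColimitsOfShape (Discrete ι) Q]

/-- `P` applied to the generator cofan is a colimit cofan. -/
noncomputable def mapCofanIsColimit (M : ModuleCat.{u} R) :
    IsColimit (Cofan.mk (P.obj (F0 M)) (fun x : M => P.map ((genCofan M).inj x))) :=
  isColimitCofanMkObjOfIsColimit P _ _ (genCofanIsColimit M)

/-- The images of maps out of `R` are jointly epimorphic. -/
lemma jointly_epi {M : ModuleCat.{u} R} {T : ModuleCat.{u} S} (u v : P.obj M ⟶ T)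
    (h : ∀ m : ModuleCat.of R R ⟶ M, P.map m ≫ u = P.map m ≫ v) : u = v := by
  have hepi : Epi (P.map (pr M)) := P.map_epi _
  rw [← cancel_epi (P.map (pr M))]
  apply Cofan.IsColimit.hom_ext (mapCofanIsColimit P M)
  intro x
  simp only [cofan_mk_inj, ← Category.assoc]
  erw [← P.map_comp, inj_comp_pr]
  exact h _

variable {P Q}

/-- The induced map `P (F0 M) ⟶ Q M`. -/
noncomputable def desc0 (t : P.obj (ModuleCat.of R R) ⟶ Q.obj (ModuleCat.of R R))
    (M : ModuleCat.{u} R) : P.obj (F0 M) ⟶ Q.obj M :=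
  Cofan.IsColimit.desc (mapCofanIsColimit P M) (fun x => t ≫ Q.map (gen M x))

lemma desc0_fac (t : P.obj (ModuleCat.of R R) ⟶ Q.obj (ModuleCat.of R R))
    (M : ModuleCat.{u} R) (x : M) :
    P.map ((genCofan M).inj x) ≫ desc0 t M = t ≫ Q.map (gen M x) :=
  Cofan.IsColimit.fac (mapCofanIsColimit P M) _ x

lemma hom_sum_apply {ι : Type*} {A B : ModuleCat.{u} R} (s : Finset ι)
    (f : ι → (A ⟶ B)) (a : A) : (∑ x ∈ s, f x) a = ∑ x ∈ s, f x a := by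
  change (∑ x ∈ s, f x).hom a = ∑ x ∈ s, (f x).hom a
  rw [ModuleCat.hom_sum, LinearMap.coe_sum, Finset.sum_apply]

lemma desc0_comm (t : P.obj (ModuleCat.of R R) ⟶ Q.obj (ModuleCat.of R R))
    (ht : ∀ r : R,
      P.map (ModuleCat.ofHom (rmul R r)) ≫ t = t ≫ Q.map (ModuleCat.ofHom (rmul R r)))
    (M : ModuleCat.{u} R) (g : ModuleCat.of R R ⟶ F0 M) :
    P.map g ≫ desc0 t M = t ≫ Q.map (g ≫ pr M) := by
  classical
  set v : (M : Type u) →₀ R := g (1 : R) with hv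
  have hg : g = ∑ x ∈ v.support,
      ModuleCat.ofHom (rmul R (v x)) ≫ (genCofan M).inj x := by
    apply ModuleCat.hom_ext
    apply LinearMap.ext_ring
    erw [hom_sum_apply]
    show v = _
    conv_lhs => rw [← Finsupp.sum_single v]
    rw [Finsupp.sum]
    apply Finset.sum_congr rfl
    intro x _
    simp only [genCofan, rmul, ModuleCat.ofHom, F0, ModuleCat.hom_comp, Cofan.mk_pt,
      LinearMap.comp_apply, LinearMap.coe_mk, AddHom.coe_mk, id_eq]
    show Finsupp.single x (v x) = Finsupp.single x ((1 : R) * v x)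
    rw [one_mul]
  have hgpr : g ≫ pr M = ∑ x ∈ v.support,
      ModuleCat.ofHom (rmul R (v x)) ≫ gen M x := by
    apply ModuleCat.hom_ext
    apply LinearMap.ext_ring
    erw [hom_sum_apply]
    show (pr M) v = _
    show Finsupp.linearCombination R _root_.id v = _
    rw [Finsupp.linearCombination_apply, Finsupp.sum]
    apply Finset.sum_congr rfl
    intro x _
    simp only [gen, rmul, ModuleCat.ofHom, ModuleCat.hom_comp, LinearMap.comp_apply,
      LinearMap.coe_mk, AddHom.coe_mk, id_eq]
    show v x • x = LinearMap.toSpanSingleton R M x ((1 : R) * v x)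
    rw [one_mul, LinearMap.toSpanSingleton_apply]
  rw [hgpr]
  conv_lhs => rw [hg]
  erw [P.map_sum, Q.map_sum, Preadditive.sum_comp, Preadditive.comp_sum]
  apply Finset.sum_congr rfl
  intro x _
  erw [P.map_comp, Category.assoc, desc0_fac, ← Category.assoc, ht, Category.assoc,
    ← Q.map_comp]

lemma desc0_zero (t : P.obj (ModuleCat.of R R) ⟶ Q.obj (ModuleCat.of R R))
    (ht : ∀ r : R,
      P.map (ModuleCat.ofHom (rmul R r)) ≫ t = t ≫ Q.map (ModuleCat.ofHom (rmul R r)))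
    (M : ModuleCat.{u} R) :
    P.map (kernel.ι (pr M)) ≫ desc0 t M = 0 := by
  apply jointly_epi P
  intro m
  rw [← Category.assoc, ← P.map_comp, desc0_comm t ht, Category.assoc,
    kernel.condition, Limits.comp_zero, Q.map_zero, Limits.comp_zero, Limits.comp_zero]

/-- The component `P M ⟶ Q M` of the natural transformation. -/
noncomputable def transApp (t : P.obj (ModuleCat.of R R) ⟶ Q.obj (ModuleCat.of R R))
    (ht : ∀ r : R,
      P.map (ModuleCat.ofHom (rmul R r)) ≫ t = t ≫ Q.map (ModuleCat.ofHom (rmul R r)))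
    (M : ModuleCat.{u} R) : P.obj M ⟶ Q.obj M :=
  (CokernelCofork.IsColimit.desc'
    (isColimitCoforkMapOfIsColimit' P (kernel.condition (pr M)) (cokIsColimit M))
    (desc0 t M) (desc0_zero t ht M)).1

lemma transApp_fac (t : P.obj (ModuleCat.of R R) ⟶ Q.obj (ModuleCat.of R R))
    (ht : ∀ r : R,
      P.map (ModuleCat.ofHom (rmul R r)) ≫ t = t ≫ Q.map (ModuleCat.ofHom (rmul R r)))
    (M : ModuleCat.{u} R) :
    P.map (pr M) ≫ transApp t ht M = desc0 t M :=
  (CokernelCofork.IsColimit.desc'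
    (isColimitCoforkMapOfIsColimit' P (kernel.condition (pr M)) (cokIsColimit M))
    (desc0 t M) (desc0_zero t ht M)).2

lemma transApp_char (t : P.obj (ModuleCat.of R R) ⟶ Q.obj (ModuleCat.of R R))
    (ht : ∀ r : R,
      P.map (ModuleCat.ofHom (rmul R r)) ≫ t = t ≫ Q.map (ModuleCat.ofHom (rmul R r)))
    (M : ModuleCat.{u} R) (m : ModuleCat.of R R ⟶ M) :
    P.map m ≫ transApp t ht M = t ≫ Q.map m := by
  conv_lhs => rw [hom_eq_gen m, ← inj_comp_pr]
  erw [P.map_comp, Category.assoc, transApp_fac, desc0_fac]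
  conv_rhs => rw [hom_eq_gen m]

/-- The natural transformation `P ⟶ Q`. -/
noncomputable def mkNatTrans (t : P.obj (ModuleCat.of R R) ⟶ Q.obj (ModuleCat.of R R))
    (ht : ∀ r : R,
      P.map (ModuleCat.ofHom (rmul R r)) ≫ t = t ≫ Q.map (ModuleCat.ofHom (rmul R r))) :
    P ⟶ Q where
  app M := transApp t ht M
  naturality M N φ := by
    apply jointly_epi P
    intro m
    rw [← Category.assoc, ← P.map_comp, transApp_char t ht,
      ← Category.assoc, transApp_char t ht, Category.assoc, ← Q.map_comp]

end Functor

end EWaux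

open EWaux CategoryTheory.Limits

theorem eilenberg_watts_comparison {R S : Type u} [Ring R] [Ring S]
    (P Q : ModuleCat.{u} R ⥤ ModuleCat.{u} S) [P.Additive] [Q.Additive]
    [Limits.PreservesFiniteColimits P] [Limits.PreservesFiniteColimits Q]
    [∀ ι : Type u, Limits.PreservesColimitsOfShape (Discrete ι) P]
    [∀ ι : Type u, Limits.PreservesColimitsOfShape (Discrete ι) Q]
    (e : P.obj (ModuleCat.of R R) ≅ Q.obj (ModuleCat.of R R))
    (he : ∀ r : R,
      P.map (ModuleCat.ofHom (rmul R r)) ≫ e.hom = e.hom ≫ Q.map (ModuleCat.ofHom (rmul R r))) :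
    Nonempty (P ≅ Q) := by
  have he' : ∀ r : R,
      Q.map (ModuleCat.ofHom (rmul R r)) ≫ e.inv = e.inv ≫ P.map (ModuleCat.ofHom (rmul R r)) := by
    intro r
    rw [Iso.comp_inv_eq, Category.assoc, he r, Iso.inv_hom_id_assoc]
  refine ⟨⟨mkNatTrans e.hom he, mkNatTrans e.inv he', ?_, ?_⟩⟩
  · apply NatTrans.ext
    funext M
    show transApp e.hom he M ≫ transApp e.inv he' M = 𝟙 (P.obj M)
    apply jointly_epi P
    intro m
    rw [← Category.assoc, transApp_char, Category.assoc, transApp_char,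
      ← Category.assoc, e.hom_inv_id, Category.id_comp, Category.comp_id]
  · apply NatTrans.ext
    funext M
    show transApp e.inv he' M ≫ transApp e.hom he M = 𝟙 (Q.obj M)
    apply jointly_epi Q
    intro m
    rw [← Category.assoc, transApp_char, Category.assoc, transApp_char,
      ← Category.assoc, e.inv_hom_id, Category.id_comp, Category.comp_id]
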